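/- Let 𝒞 = (V,ℛ) be a coherent configuration with principal idempotent P₀ = Σ_{X ∈ Fib(𝒞)} J_X/|X|, and let U, U' be disjoint nonempty unions of fibers with V = U ∪ U'. Then 𝒞 is the internal direct sum 𝒞_U ⊞ 𝒞_{U'} (i.e., |ℛ_{X,Y}| = 1 for all fibers X ⊆ U, Y ⊆ U') if and only if 𝒫_U(𝒞) ∩ 𝒫_{U'}(𝒞) = {P₀}, where 𝒫_W(𝒞) := {P ∈ 𝒫(𝒞) : P·I_W ≠ 0}. -/
import Mathlib


open scoped Classical

namespace CCPaper

variable {V : Type*}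

/-- The diagonal relation `Δ_X = {(x,x) : x ∈ X}` on a subset `X ⊆ V`. -/
def diag (X : Set V) : Set (V × V) := {p : V × V | p.1 ∈ X ∧ p.1 = p.2}

/-- The transpose `R^t = {(v,u) : (u,v) ∈ R}` of a relation. -/
def transp (R : Set (V × V)) : Set (V × V) := Prod.swap ⁻¹' R

/-- The intersection number `|{w : (p.1,w) ∈ R, (w,p.2) ∈ S}|` at a pair `p`. -/
noncomputable def iNum (R S : Set (V × V)) (p : V × V) : ℕ :=
  Nat.card {w : V | (p.1, w) ∈ R ∧ (w, p.2) ∈ S}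

/-- `ℛ` is a coherent configuration (scheme) on the finite set `V`:
(C1) `ℛ` consists of nonempty relations partitioning `V × V`;
(C2) the diagonal is a union of relations of `ℛ`;
(C3) `ℛ` is closed under transposition;
(C4) intersection numbers are constant on each relation of `ℛ`. -/
def IsCC [Fintype V] (ℛ : Set (Set (V × V))) : Prop :=
  (∀ R ∈ ℛ, R.Nonempty) ∧
  (∀ p : V × V, ∃! R, R ∈ ℛ ∧ p ∈ R) ∧
  (∀ R ∈ ℛ, (∃ p ∈ R, p.1 = p.2) → ∀ p ∈ R, p.1 = p.2) ∧
  (∀ R ∈ ℛ, transp R ∈ ℛ) ∧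
  (∀ R ∈ ℛ, ∀ S ∈ ℛ, ∀ T ∈ ℛ, ∀ p ∈ T, ∀ q ∈ T, iNum R S p = iNum R S q)

/-- A fiber of the configuration: a nonempty `X ⊆ V` with `Δ_X ∈ ℛ`. -/
def IsFiber [Fintype V] (ℛ : Set (Set (V × V))) (X : Set V) : Prop :=
  X.Nonempty ∧ diag X ∈ ℛ

/-- `ℛ_{X,Y}`, the set of basis relations contained in `X × Y`. -/
def relsBtw [Fintype V] (ℛ : Set (Set (V × V))) (X Y : Set V) : Set (Set (V × V)) :=
  {R | R ∈ ℛ ∧ R ⊆ X ×ˢ Y}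

/-- Out-degree `d_R = |R_out(x)|` (computed at a chosen point of `R`;
for a basis relation of a scheme this is independent of the point). -/
noncomputable def outDeg (R : Set (V × V)) : ℕ :=
  if h : R.Nonempty then Nat.card {y : V | (h.choose.1, y) ∈ R} else 0

/-- In-degree `e_R = |R_in(y)|` (computed at a chosen point of `R`). -/
noncomputable def inDeg (R : Set (V × V)) : ℕ :=
  if h : R.Nonempty then Nat.card {x : V | (x, h.choose.2) ∈ R} else 0

/-- The structure constant `c_{RS}^T` (computed at a chosen pair of `T`). -/
noncomputable def sConst (R S T : Set (V × V)) : ℕ :=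
  if h : T.Nonempty then iNum R S h.choose else 0

/-- The complex product `RS = {T ∈ ℛ : c_{RS}^T > 0}`. -/
def cProd [Fintype V] (ℛ : Set (Set (V × V))) (R S : Set (V × V)) : Set (Set (V × V)) :=
  {T | T ∈ ℛ ∧ 0 < sConst R S T}

/-- A relation is thin if `d_R = e_R = 1`. -/
def IsThin (R : Set (V × V)) : Prop := outDeg R = 1 ∧ inDeg R = 1

/-- `ℛ` is `r`-balanced: `|ℛ_{X,Y}| = r` for all fibers `X, Y`. -/
def IsBalancedWith [Fintype V] (ℛ : Set (Set (V × V))) (r : ℕ) : Prop :=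
  ∀ X Y : Set V, IsFiber ℛ X → IsFiber ℛ Y → Nat.card (relsBtw ℛ X Y) = r

/-- `ℛ` is balanced: `|ℛ_{X,Y}|` is the same for all pairs of fibers. -/
def IsBalanced [Fintype V] (ℛ : Set (Set (V × V))) : Prop := ∃ r : ℕ, IsBalancedWith ℛ r

/-- An `(m,n,r)`-scheme: a coherent configuration which is `r`-balanced, all of whose
fibers have size `m`, and which has exactly `n` fibers. -/
def IsMNRScheme [Fintype V] (ℛ : Set (Set (V × V))) (m n r : ℕ) : Prop :=
  IsCC ℛ ∧ IsBalancedWith ℛ r ∧ (∀ X : Set V, IsFiber ℛ X → Nat.card X = m) ∧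
    Nat.card {X : Set V | IsFiber ℛ X} = n

/-- A scheme is reduced if no basis relation between distinct fibers is thin. -/
def IsReduced [Fintype V] (ℛ : Set (Set (V × V))) : Prop :=
  ∀ X Y : Set V, IsFiber ℛ X → IsFiber ℛ Y → X ≠ Y → ∀ R ∈ relsBtw ℛ X Y, ¬ IsThin R

/-- A (possibly empty) union of fibers. -/
def IsFiberUnion [Fintype V] (ℛ : Set (Set (V × V))) (U : Set V) : Prop :=
  ∃ F : Set (Set V), (∀ X ∈ F, IsFiber ℛ X) ∧ U = ⋃₀ F

/-- The adjacency matrix of a relation. -/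
noncomputable def adjMat [Fintype V] (R : Set (V × V)) : Matrix V V ℂ :=
  fun u v => if (u, v) ∈ R then 1 else 0

/-- The diagonal idempotent `I_X` of a subset `X ⊆ V`. -/
noncomputable def idMat [Fintype V] (X : Set V) : Matrix V V ℂ :=
  fun u v => if u = v ∧ u ∈ X then 1 else 0

/-- The adjacency algebra `𝒜(𝒞)`, the subalgebra of `Mat_V(ℂ)` spanned by the
adjacency matrices of the basis relations. -/
noncomputable def adjAlg [Fintype V] [DecidableEq V] (ℛ : Set (Set (V × V))) :
    Subalgebra ℂ (Matrix V V ℂ) :=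
  Algebra.adjoin ℂ (adjMat '' ℛ)

/-- `P` is a central primitive idempotent of the (multiplicatively closed) set of
matrices `S`: `P ∈ S` is a nonzero idempotent commuting with everything in `S`, which is
not the sum of two nonzero orthogonal central idempotents of `S`. -/
def IsCPIin [Fintype V] (S : Set (Matrix V V ℂ)) (P : Matrix V V ℂ) : Prop :=
  P ∈ S ∧ P ≠ 0 ∧ P * P = P ∧ (∀ Q ∈ S, P * Q = Q * P) ∧
  ∀ Q₁ Q₂ : Matrix V V ℂ, Q₁ ∈ S → Q₂ ∈ S →
    Q₁ * Q₁ = Q₁ → Q₂ * Q₂ = Q₂ →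
    (∀ M ∈ S, Q₁ * M = M * Q₁) → (∀ M ∈ S, Q₂ * M = M * Q₂) →
    Q₁ * Q₂ = 0 → Q₂ * Q₁ = 0 → P = Q₁ + Q₂ → Q₁ = 0 ∨ Q₂ = 0

/-- `𝒫(𝒞)`: the set of central primitive idempotents of the adjacency algebra. -/
def CPIs [Fintype V] [DecidableEq V] (ℛ : Set (Set (V × V))) : Set (Matrix V V ℂ) :=
  {P | IsCPIin (adjAlg ℛ : Set (Matrix V V ℂ)) P}

/-- The adjacency algebra `I_X · 𝒜(𝒞) · I_X` of the homogeneous component `𝒞_X`,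
as a subset of `Mat_V(ℂ)`. -/
def compAlgSet [Fintype V] [DecidableEq V] (ℛ : Set (Set (V × V))) (X : Set V) :
    Set (Matrix V V ℂ) :=
  {M | ∃ N ∈ adjAlg ℛ, M = idMat X * N * idMat X}

/-- `𝒫(𝒞_X)`: the central primitive idempotents of the homogeneous component `𝒞_X`. -/
def CPIsComp [Fintype V] [DecidableEq V] (ℛ : Set (Set (V × V))) (X : Set V) :
    Set (Matrix V V ℂ) :=
  {P | IsCPIin (compAlgSet ℛ X) P}

/-- The degree `n_P` of a central primitive idempotent `P` of the algebra (given as the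
set `S`): the positive integer with `n_P ^ 2 = dim_ℂ (S · P)`. -/
noncomputable def degOf [Fintype V] [DecidableEq V] (S : Set (Matrix V V ℂ))
    (P : Matrix V V ℂ) : ℕ :=
  Nat.sqrt (Module.finrank ℂ
    (Submodule.span ℂ {M : Matrix V V ℂ | ∃ a ∈ S, M = a * P}))


/-- The principal idempotent `P₀ = Σ_{X ∈ Fib(𝒞)} J_X / |X|`: its `(u,v)`-entry is
`1/|X|` when `u, v` lie in a common fiber `X`, and `0` otherwise. -/
noncomputable def P0 [Fintype V] (ℛ : Set (Set (V × V))) : Matrix V V ℂ :=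
  fun u v =>
    if h : ∃ X : Set V, IsFiber ℛ X ∧ u ∈ X ∧ v ∈ X then ((Nat.card h.choose : ℂ))⁻¹ else 0

set_option linter.unusedSectionVars false

-- ============ auxiliary development ============
section Aux
variable {V : Type*} [Fintype V] [DecidableEq V]
variable {ℛ : Set (Set (V × V))}

/-- The unique relation containing a pair. -/
lemma rel_eq_of_mem (hCC : IsCC ℛ) {R S : Set (V × V)} {p : V × V}
    (hR : R ∈ ℛ) (hS : S ∈ ℛ) (hpR : p ∈ R) (hpS : p ∈ S) : R = S := by
  obtain ⟨T, hT, hTu⟩ := hCC.2.1 p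
  rw [hTu R ⟨hR, hpR⟩, hTu S ⟨hS, hpS⟩]

lemma exists_rel (hCC : IsCC ℛ) (p : V × V) : ∃ R ∈ ℛ, p ∈ R :=
  ⟨(hCC.2.1 p).choose, (hCC.2.1 p).choose_spec.1.1, (hCC.2.1 p).choose_spec.1.2⟩

lemma exists_fiber (hCC : IsCC ℛ) (x : V) : ∃ X : Set V, IsFiber ℛ X ∧ x ∈ X := by
  obtain ⟨R, hR, hxR⟩ := exists_rel hCC (x, x)
  have hdiag : ∀ p ∈ R, p.1 = p.2 := hCC.2.2.1 R hR ⟨(x, x), hxR, rfl⟩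
  refine ⟨{v | (v, v) ∈ R}, ⟨⟨x, hxR⟩, ?_⟩, hxR⟩
  have : diag {v | (v, v) ∈ R} = R := by
    ext p
    constructor
    · rintro ⟨h1, h2⟩
      simp only [Set.mem_setOf_eq] at h1
      obtain ⟨u, v⟩ := p
      simp only at h1 h2 ⊢
      subst h2; exact h1
    · intro hp
      have := hdiag p hp
      obtain ⟨u, v⟩ := p
      simp only at this; subst this
      exact ⟨hp, rfl⟩
  rw [this]; exact hR

lemma fiber_eq_of_mem (hCC : IsCC ℛ) {X Y : Set V} (hX : IsFiber ℛ X) (hY : IsFiber ℛ Y)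
    {x : V} (hxX : x ∈ X) (hxY : x ∈ Y) : X = Y := by
  have h := rel_eq_of_mem hCC (p := (x, x)) hX.2 hY.2 ⟨hxX, rfl⟩ ⟨hxY, rfl⟩
  ext v
  constructor
  · intro hv
    have : ((v, v) : V × V) ∈ diag X := ⟨hv, rfl⟩
    rw [h] at this; exact this.1
  · intro hv
    have : ((v, v) : V × V) ∈ diag Y := ⟨hv, rfl⟩
    rw [← h] at this; exact this.1

/-- basis relations live inside blocks of fibers -/
lemma rel_subset_block (hCC : IsCC ℛ) {R : Set (V × V)} (hR : R ∈ ℛ)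
    {X Y : Set V} (hX : IsFiber ℛ X) (hY : IsFiber ℛ Y)
    {x y : V} (hxy : (x, y) ∈ R) (hx : x ∈ X) (hy : y ∈ Y) : R ⊆ X ×ˢ Y := by
  rintro ⟨u, v⟩ huv
  constructor
  · -- use iNum (diag X) R
    have h1 : iNum (diag X) R (x, y) = 1 := by
      unfold iNum
      have : {w : V | (x, w) ∈ diag X ∧ (w, y) ∈ R} = {x} := by
        ext w
        simp only [Set.mem_setOf_eq, Set.mem_singleton_iff, diag]
        constructor
        · rintro ⟨⟨-, h⟩, -⟩; exact h.symm
        · rintro rfl; exact ⟨⟨hx, rfl⟩, hxy⟩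
      rw [this]; simp
    have h2 : iNum (diag X) R (u, v) = 1 := by
      rw [hCC.2.2.2.2 (diag X) hX.2 R hR R hR (u, v) huv (x, y) hxy]; exact h1
    have hne : {w : V | (u, w) ∈ diag X ∧ (w, v) ∈ R}.Nonempty := by
      by_contra hc
      rw [Set.not_nonempty_iff_eq_empty] at hc
      unfold iNum at h2
      rw [hc] at h2
      simp at h2
    obtain ⟨w, ⟨hwX, hw⟩, -⟩ := hne
    exact hw ▸ hwX
  · -- use iNum R (diag Y)
    have h1 : iNum R (diag Y) (x, y) = 1 := by
      unfold iNum
      have : {w : V | (x, w) ∈ R ∧ (w, y) ∈ diag Y} = {y} := by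
        ext w
        simp only [Set.mem_setOf_eq, Set.mem_singleton_iff, diag]
        constructor
        · rintro ⟨-, ⟨-, h⟩⟩; exact h
        · rintro rfl; exact ⟨hxy, ⟨hy, rfl⟩⟩
      rw [this]; simp
    have h2 : iNum R (diag Y) (u, v) = 1 := by
      rw [hCC.2.2.2.2 R hR (diag Y) hY.2 R hR (u, v) huv (x, y) hxy]; exact h1
    have hne : {w : V | (u, w) ∈ R ∧ (w, v) ∈ diag Y}.Nonempty := by
      by_contra hc
      rw [Set.not_nonempty_iff_eq_empty] at hc
      unfold iNum at h2
      rw [hc] at h2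
      simp at h2
    obtain ⟨w, -, ⟨hwY, hw⟩⟩ := hne
    exact hw ▸ hwY

end Aux

section Aux2
variable {V : Type*} [Fintype V] [DecidableEq V]
variable {ℛ : Set (Set (V × V))}

/-- all-ones block matrix on `X × Y` -/
noncomputable def Jmat (X Y : Set V) : Matrix V V ℂ :=
  fun u v => if u ∈ X ∧ v ∈ Y then 1 else 0

lemma card_fiber_ne_zero {X : Set V} (hX : IsFiber ℛ X) : (Nat.card X : ℂ) ≠ 0 := by
  have : Nonempty X := hX.1.to_subtype
  have : 0 < Nat.card X := Nat.card_pos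
  exact_mod_cast this.ne'

lemma P0_apply_of_mem (hCC : IsCC ℛ) {X : Set V} (hX : IsFiber ℛ X) {u v : V}
    (hu : u ∈ X) (hv : v ∈ X) : P0 ℛ u v = (Nat.card X : ℂ)⁻¹ := by
  have h : ∃ Z : Set V, IsFiber ℛ Z ∧ u ∈ Z ∧ v ∈ Z := ⟨X, hX, hu, hv⟩
  show (if h : _ then _ else _) = _
  rw [dif_pos h]
  have : h.choose = X := fiber_eq_of_mem hCC h.choose_spec.1 hX h.choose_spec.2.1 hu
  rw [this]

lemma P0_apply_of_not {u v : V} (h : ¬ ∃ Z : Set V, IsFiber ℛ Z ∧ u ∈ Z ∧ v ∈ Z) :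
    P0 ℛ u v = 0 := by
  show (if h : _ then _ else _) = _
  rw [dif_neg h]

lemma sum_ite_mem_set (X : Set V) (c : ℂ) :
    ∑ w : V, (if w ∈ X then c else 0) = (Nat.card X : ℂ) * c := by
  rw [← Finset.sum_filter, Finset.sum_const, nsmul_eq_mul]
  congr 2
  rw [Nat.card_eq_fintype_card, Fintype.card_subtype]

lemma P0_mul_J (hCC : IsCC ℛ) {X Y : Set V} (hX : IsFiber ℛ X) (hY : IsFiber ℛ Y) :
    P0 ℛ * Jmat X Y = Jmat X Y := by
  ext u v
  rw [Matrix.mul_apply]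
  by_cases hv : v ∈ Y
  · by_cases hu : u ∈ X
    · have : ∀ w : V, P0 ℛ u w * Jmat X Y w v = (if w ∈ X then (Nat.card X : ℂ)⁻¹ else 0) := by
        intro w
        by_cases hw : w ∈ X
        · rw [if_pos hw, P0_apply_of_mem hCC hX hu hw]
          simp [Jmat, hw, hv]
        · rw [if_neg hw]
          simp only [Jmat, hw, false_and, if_false, mul_zero]
      rw [Finset.sum_congr rfl (fun w _ => this w), sum_ite_mem_set,
        mul_inv_cancel₀ (card_fiber_ne_zero hX)]
      simp [Jmat, hu, hv]
    · have : ∀ w : V, P0 ℛ u w * Jmat X Y w v = 0 := by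
        intro w
        by_cases hw : w ∈ X
        · have : P0 ℛ u w = 0 := by
            apply P0_apply_of_not
            rintro ⟨Z, hZ, huZ, hwZ⟩
            exact hu ((fiber_eq_of_mem hCC hZ hX hwZ hw) ▸ huZ)
          rw [this, zero_mul]
        · simp only [Jmat, hw, false_and, if_false, mul_zero]
      rw [Finset.sum_congr rfl (fun w _ => this w), Finset.sum_const_zero]
      simp [Jmat, hu]
  · have : ∀ w : V, P0 ℛ u w * Jmat X Y w v = 0 := by
      intro w; simp only [Jmat, hv, and_false, if_false, mul_zero]
    rw [Finset.sum_congr rfl (fun w _ => this w), Finset.sum_const_zero]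
    simp [Jmat, hv]

lemma J_mul_P0 (hCC : IsCC ℛ) {X Y : Set V} (hX : IsFiber ℛ X) (hY : IsFiber ℛ Y) :
    Jmat X Y * P0 ℛ = Jmat X Y := by
  ext u v
  rw [Matrix.mul_apply]
  by_cases hu : u ∈ X
  · by_cases hv : v ∈ Y
    · have : ∀ w : V, Jmat X Y u w * P0 ℛ w v = (if w ∈ Y then (Nat.card Y : ℂ)⁻¹ else 0) := by
        intro w
        by_cases hw : w ∈ Y
        · rw [if_pos hw, P0_apply_of_mem hCC hY hw hv]
          simp [Jmat, hw, hu]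
        · rw [if_neg hw]
          simp only [Jmat, hw, and_false, if_false, zero_mul]
      rw [Finset.sum_congr rfl (fun w _ => this w), sum_ite_mem_set,
        mul_inv_cancel₀ (card_fiber_ne_zero hY)]
      simp [Jmat, hu, hv]
    · have : ∀ w : V, Jmat X Y u w * P0 ℛ w v = 0 := by
        intro w
        by_cases hw : w ∈ Y
        · have : P0 ℛ w v = 0 := by
            apply P0_apply_of_not
            rintro ⟨Z, hZ, hwZ, hvZ⟩
            exact hv ((fiber_eq_of_mem hCC hZ hY hwZ hw) ▸ hvZ)
          rw [this, mul_zero]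
        · simp only [Jmat, hw, and_false, if_false, zero_mul]
      rw [Finset.sum_congr rfl (fun w _ => this w), Finset.sum_const_zero]
      simp [Jmat, hv]
  · have : ∀ w : V, Jmat X Y u w * P0 ℛ w v = 0 := by
      intro w; simp only [Jmat, hu, false_and, if_false, zero_mul]
    rw [Finset.sum_congr rfl (fun w _ => this w), Finset.sum_const_zero]
    simp [Jmat, hu]

lemma adjMat_mem_adjAlg {R : Set (V × V)} (hR : R ∈ ℛ) : adjMat R ∈ adjAlg ℛ :=
  Algebra.subset_adjoin ⟨R, hR, rfl⟩

lemma Jmat_eq_sum (hCC : IsCC ℛ) {X Y : Set V} (hX : IsFiber ℛ X) (hY : IsFiber ℛ Y) :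
    Jmat X Y = ∑ R ∈ (relsBtw ℛ X Y).toFinite.toFinset, adjMat R := by
  ext u v
  rw [Matrix.sum_apply]
  by_cases huv : u ∈ X ∧ v ∈ Y
  · obtain ⟨R₀, hR₀, hmem⟩ := exists_rel hCC (u, v)
    have hR₀sub : R₀ ⊆ X ×ˢ Y := rel_subset_block hCC hR₀ hX hY hmem huv.1 huv.2
    have hR₀F : R₀ ∈ (relsBtw ℛ X Y).toFinite.toFinset := by
      rw [Set.Finite.mem_toFinset]; exact ⟨hR₀, hR₀sub⟩
    rw [Finset.sum_eq_single_of_mem R₀ hR₀F]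
    · simp [Jmat, huv.1, huv.2, adjMat, hmem]
    · intro S hS hSne
      rw [Set.Finite.mem_toFinset] at hS
      have : (u, v) ∉ S := fun h => hSne (rel_eq_of_mem hCC hS.1 hR₀ h hmem)
      simp [adjMat, this]
  · have : ∀ R ∈ (relsBtw ℛ X Y).toFinite.toFinset, adjMat R u v = 0 := by
      intro R hR
      rw [Set.Finite.mem_toFinset] at hR
      have : (u, v) ∉ R := fun h => huv (hR.2 h)
      simp [adjMat, this]
    rw [Finset.sum_congr rfl this, Finset.sum_const_zero]
    simp [Jmat, huv]

lemma Jmat_mem_adjAlg (hCC : IsCC ℛ) {X Y : Set V} (hX : IsFiber ℛ X) (hY : IsFiber ℛ Y) :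
    Jmat X Y ∈ adjAlg ℛ := by
  rw [Jmat_eq_sum hCC hX hY]
  exact Subalgebra.sum_mem _ (fun R hR => adjMat_mem_adjAlg (Set.Finite.mem_toFinset _ |>.mp hR).1)

lemma idMat_mul_apply (W : Set V) (M : Matrix V V ℂ) (u v : V) :
    (idMat W * M) u v = if u ∈ W then M u v else 0 := by
  rw [Matrix.mul_apply]
  rw [Finset.sum_eq_single u]
  · by_cases h : u ∈ W <;> simp [idMat, h]
  · intro w _ hw; simp [idMat, hw.symm]
  · simp

lemma mul_idMat_apply (W : Set V) (M : Matrix V V ℂ) (u v : V) :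
    (M * idMat W) u v = if v ∈ W then M u v else 0 := by
  rw [Matrix.mul_apply]
  rw [Finset.sum_eq_single v]
  · by_cases h : v ∈ W <;> simp [idMat, h]
  · intro w _ hw; simp [idMat, hw]
  · simp

lemma diag_mem_of_fiberUnion (hCC : IsCC ℛ) {W : Set V} (hW : IsFiberUnion ℛ W)
    {x : V} (hx : x ∈ W) : ∃ X : Set V, IsFiber ℛ X ∧ x ∈ X ∧ X ⊆ W := by
  obtain ⟨F, hF, rfl⟩ := hW
  obtain ⟨X, hXF, hxX⟩ := Set.mem_sUnion.mp hx
  exact ⟨X, hF X hXF, hxX, Set.subset_sUnion_of_mem hXF⟩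

lemma fiber_subset_of_fiberUnion (hCC : IsCC ℛ) {W : Set V} (hW : IsFiberUnion ℛ W)
    {X : Set V} (hX : IsFiber ℛ X) {x : V} (hx : x ∈ X) (hxW : x ∈ W) : X ⊆ W := by
  obtain ⟨Y, hY, hxY, hYW⟩ := diag_mem_of_fiberUnion hCC hW hxW
  rw [fiber_eq_of_mem hCC hX hY hx hxY]; exact hYW

lemma idMat_mem_adjAlg (hCC : IsCC ℛ) {W : Set V} (hW : IsFiberUnion ℛ W) :
    idMat W ∈ adjAlg ℛ := by
  classical
  obtain ⟨F, hF, rfl⟩ := hW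
  have key : idMat (⋃₀ F) = ∑ X ∈ F.toFinite.toFinset, adjMat (diag X) := by
    ext u v
    rw [Matrix.sum_apply]
    by_cases huv : u = v ∧ u ∈ ⋃₀ F
    · obtain ⟨rfl, huW⟩ := huv
      obtain ⟨X, hXF, huX⟩ := Set.mem_sUnion.mp huW
      rw [Finset.sum_eq_single_of_mem X (Set.Finite.mem_toFinset _ |>.mpr hXF)]
      · simp [idMat, huW, adjMat, diag, huX]
      · intro Y hY hYne
        rw [Set.Finite.mem_toFinset] at hY
        have : (u, u) ∉ diag Y := by
          rintro ⟨huY, -⟩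
          exact hYne (fiber_eq_of_mem hCC (hF Y hY) (hF X hXF) huY huX)
        simp [adjMat, this]
    · have : ∀ X ∈ F.toFinite.toFinset, adjMat (diag X) u v = 0 := by
        intro X hX
        rw [Set.Finite.mem_toFinset] at hX
        have : (u, v) ∉ diag X := by
          rintro ⟨huX, heq⟩
          exact huv ⟨heq, Set.mem_sUnion.mpr ⟨X, hX, huX⟩⟩
        simp [adjMat, this]
      rw [Finset.sum_congr rfl this, Finset.sum_const_zero]
      have : ¬ (u = v ∧ u ∈ ⋃₀ F) := huv
      simp only [idMat]
      rw [if_neg this]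
  rw [key]
  exact Subalgebra.sum_mem _ (fun X hX =>
    adjMat_mem_adjAlg (hF X (Set.Finite.mem_toFinset _ |>.mp hX)).2)

end Aux2

section Aux3
variable {V : Type*} [Fintype V] [DecidableEq V]
variable {ℛ : Set (Set (V × V))}

lemma sum_ite_card (p : V → Prop) (c : ℂ) :
    ∑ w : V, (if p w then c else 0) = ((Finset.univ.filter p).card : ℂ) * c := by
  rw [← Finset.sum_filter, Finset.sum_const, nsmul_eq_mul]

lemma natCard_set_eq_filter (X : Set V) :
    Nat.card X = (Finset.univ.filter (· ∈ X)).card := by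
  rw [Nat.card_eq_fintype_card, Fintype.card_subtype]

/-- commuting with generators gives commuting with the adjacency algebra -/
lemma commute_adjAlg {z : Matrix V V ℂ}
    (hgen : ∀ R ∈ ℛ, z * adjMat R = adjMat R * z) :
    ∀ a ∈ adjAlg ℛ, z * a = a * z := by
  intro a ha
  induction ha using Algebra.adjoin_induction with
  | mem x hx =>
    obtain ⟨R, hR, rfl⟩ := hx
    exact hgen R hR
  | algebraMap r =>
    rw [Algebra.algebraMap_eq_smul_one, mul_smul_comm, smul_mul_assoc, mul_one, one_mul]
  | add x y hx hy ihx ihy => rw [mul_add, add_mul, ihx, ihy]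
  | mul x y hx hy ihx ihy => rw [← mul_assoc, ihx, mul_assoc, ihy, mul_assoc]

/-- the principal idempotent commutes with every adjacency matrix -/
lemma P0_mul_adjMat (hCC : IsCC ℛ) {R : Set (V × V)} (hR : R ∈ ℛ) :
    P0 ℛ * adjMat R = adjMat R * P0 ℛ := by
  classical
  obtain ⟨⟨x₀, y₀⟩, hp0⟩ := hCC.1 R hR
  obtain ⟨X, hX, hx₀⟩ := exists_fiber hCC x₀
  obtain ⟨Y, hY, hy₀⟩ := exists_fiber hCC y₀
  have hsub : R ⊆ X ×ˢ Y := rel_subset_block hCC hR hX hY hp0 hx₀ hy₀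
  set rowdeg : V → ℕ := fun u => (Finset.univ.filter fun w => (u, w) ∈ R).card with hrow
  set coldeg : V → ℕ := fun v => (Finset.univ.filter fun w => (w, v) ∈ R).card with hcol
  -- iNum identities
  have hrowNum : ∀ u : V, iNum R (transp R) (u, u) = rowdeg u := by
    intro u
    unfold iNum
    have : {w : V | (u, w) ∈ R ∧ (w, u) ∈ transp R} = {w : V | (u, w) ∈ R} := by
      ext w
      simp only [Set.mem_setOf_eq, transp, Set.mem_preimage, Prod.swap_prod_mk, and_self]
    rw [this, natCard_set_eq_filter]
    rfl
  have hcolNum : ∀ v : V, iNum (transp R) R (v, v) = coldeg v := by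
    intro v
    unfold iNum
    have : {w : V | (v, w) ∈ transp R ∧ (w, v) ∈ R} = {w : V | (w, v) ∈ R} := by
      ext w
      simp only [Set.mem_setOf_eq, transp, Set.mem_preimage, Prod.swap_prod_mk, and_self]
    rw [this, natCard_set_eq_filter]
    rfl
  have htR : transp R ∈ ℛ := hCC.2.2.2.1 R hR
  -- constancy
  have hrowconst : ∀ u ∈ X, rowdeg u = rowdeg x₀ := by
    intro u hu
    rw [← hrowNum, ← hrowNum]
    exact hCC.2.2.2.2 R hR (transp R) htR (diag X) hX.2 (u, u) ⟨hu, rfl⟩ (x₀, x₀) ⟨hx₀, rfl⟩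
  have hcolconst : ∀ v ∈ Y, coldeg v = coldeg y₀ := by
    intro v hv
    rw [← hcolNum, ← hcolNum]
    exact hCC.2.2.2.2 (transp R) htR R hR (diag Y) hY.2 (v, v) ⟨hv, rfl⟩ (y₀, y₀) ⟨hy₀, rfl⟩
  have hrowzero : ∀ u, u ∉ X → rowdeg u = 0 := by
    intro u hu
    rw [hrow]
    simp only [Finset.card_eq_zero, Finset.filter_eq_empty_iff]
    intro w _ hw
    exact hu (hsub hw).1
  have hcolzero : ∀ v, v ∉ Y → coldeg v = 0 := by
    intro v hv
    rw [hcol]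
    simp only [Finset.card_eq_zero, Finset.filter_eq_empty_iff]
    intro w _ hw
    exact hv (hsub hw).2
  set d := rowdeg x₀ with hd
  set e := coldeg y₀ with he
  -- double counting
  have hcount : Nat.card X * d = Nat.card Y * e := by
    have h1 : ∑ u : V, rowdeg u = ∑ p : V × V, (if p ∈ R then 1 else 0) := by
      rw [Fintype.sum_prod_type]
      refine Finset.sum_congr rfl fun u _ => ?_
      exact Finset.card_filter _ _
    have h2 : ∑ v : V, coldeg v = ∑ p : V × V, (if p ∈ R then 1 else 0) := by
      rw [Fintype.sum_prod_type_right]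
      refine Finset.sum_congr rfl fun v _ => ?_
      exact Finset.card_filter _ _
    have h3 : ∑ u : V, rowdeg u = Nat.card X * d := by
      have : ∀ u : V, rowdeg u = if u ∈ X then d else 0 := by
        intro u
        by_cases hu : u ∈ X
        · rw [if_pos hu]; exact hrowconst u hu
        · rw [if_neg hu]; exact hrowzero u hu
      rw [Finset.sum_congr rfl fun u _ => this u, ← Finset.sum_filter,
        Finset.sum_const, smul_eq_mul, natCard_set_eq_filter]
    have h4 : ∑ v : V, coldeg v = Nat.card Y * e := by
      have : ∀ v : V, coldeg v = if v ∈ Y then e else 0 := by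
        intro v
        by_cases hv : v ∈ Y
        · rw [if_pos hv]; exact hcolconst v hv
        · rw [if_neg hv]; exact hcolzero v hv
      rw [Finset.sum_congr rfl fun v _ => this v, ← Finset.sum_filter,
        Finset.sum_const, smul_eq_mul, natCard_set_eq_filter]
    rw [← h3, ← h4, h1, h2]
  -- entrywise computation
  ext u v
  rw [Matrix.mul_apply, Matrix.mul_apply]
  have lhs : ∑ w : V, P0 ℛ u w * adjMat R w v
      = if u ∈ X then ((coldeg v : ℂ)) * (Nat.card X : ℂ)⁻¹ else 0 := by
    by_cases hu : u ∈ X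
    · rw [if_pos hu]
      have : ∀ w : V, P0 ℛ u w * adjMat R w v
          = if (w, v) ∈ R then (Nat.card X : ℂ)⁻¹ else 0 := by
        intro w
        by_cases hw : (w, v) ∈ R
        · rw [if_pos hw]
          have hwX : w ∈ X := (hsub hw).1
          rw [P0_apply_of_mem hCC hX hu hwX]
          simp [adjMat, hw]
        · rw [if_neg hw]
          simp [adjMat, hw]
      rw [Finset.sum_congr rfl fun w _ => this w, sum_ite_card]
    · rw [if_neg hu]
      have : ∀ w : V, P0 ℛ u w * adjMat R w v = 0 := by
        intro w
        by_cases hw : (w, v) ∈ R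
        · have hwX : w ∈ X := (hsub hw).1
          have : P0 ℛ u w = 0 := by
            apply P0_apply_of_not
            rintro ⟨Z, hZ, huZ, hwZ⟩
            exact hu ((fiber_eq_of_mem hCC hZ hX hwZ hwX) ▸ huZ)
          rw [this, zero_mul]
        · simp [adjMat, hw]
      rw [Finset.sum_congr rfl fun w _ => this w, Finset.sum_const_zero]
  have rhs : ∑ w : V, adjMat R u w * P0 ℛ w v
      = if v ∈ Y then ((rowdeg u : ℂ)) * (Nat.card Y : ℂ)⁻¹ else 0 := by
    by_cases hv : v ∈ Y
    · rw [if_pos hv]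
      have : ∀ w : V, adjMat R u w * P0 ℛ w v
          = if (u, w) ∈ R then (Nat.card Y : ℂ)⁻¹ else 0 := by
        intro w
        by_cases hw : (u, w) ∈ R
        · rw [if_pos hw]
          have hwY : w ∈ Y := (hsub hw).2
          rw [P0_apply_of_mem hCC hY hwY hv]
          simp [adjMat, hw]
        · rw [if_neg hw]
          simp [adjMat, hw]
      rw [Finset.sum_congr rfl fun w _ => this w, sum_ite_card]
    · rw [if_neg hv]
      have : ∀ w : V, adjMat R u w * P0 ℛ w v = 0 := by
        intro w
        by_cases hw : (u, w) ∈ R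
        · have hwY : w ∈ Y := (hsub hw).2
          have : P0 ℛ w v = 0 := by
            apply P0_apply_of_not
            rintro ⟨Z, hZ, hwZ, hvZ⟩
            exact hv ((fiber_eq_of_mem hCC hZ hY hwZ hwY) ▸ hvZ)
          rw [this, mul_zero]
        · simp [adjMat, hw]
      rw [Finset.sum_congr rfl fun w _ => this w, Finset.sum_const_zero]
  rw [lhs, rhs]
  by_cases hu : u ∈ X
  · by_cases hv : v ∈ Y
    · rw [if_pos hu, if_pos hv, hcolconst v hv, hrowconst u hu]
      have hXne : (Nat.card X : ℂ) ≠ 0 := card_fiber_ne_zero hX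
      have hYne : (Nat.card Y : ℂ) ≠ 0 := card_fiber_ne_zero hY
      have key : ((Nat.card X : ℂ)) * d = (Nat.card Y : ℂ) * e := by exact_mod_cast hcount
      rw [← div_eq_mul_inv, ← div_eq_mul_inv, div_eq_div_iff hXne hYne]
      linear_combination -key
    · rw [if_pos hu, if_neg hv, hcolzero v hv]
      simp
  · by_cases hv : v ∈ Y
    · rw [if_neg hu, if_pos hv, hrowzero u hu]
      simp
    · rw [if_neg hu, if_neg hv]

lemma P0_central (hCC : IsCC ℛ) : ∀ a ∈ adjAlg ℛ, P0 ℛ * a = a * P0 ℛ :=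
  commute_adjAlg (fun R hR => P0_mul_adjMat hCC hR)

end Aux3

section Aux4
variable {V : Type*} [Fintype V] [DecidableEq V]
variable {ℛ : Set (Set (V × V))}

lemma adjMat_diag_eq_idMat (X : Set V) : adjMat (diag X) = idMat X := by
  ext u v
  simp only [adjMat, idMat, diag, Set.mem_setOf_eq]
  by_cases h : u = v
  · subst h; simp [and_comm]
  · simp [h, fun hh : u = v => h hh]

lemma idMat_mem_of_fiber (hCC : IsCC ℛ) {X : Set V} (hX : IsFiber ℛ X) :
    idMat X ∈ adjAlg ℛ := by
  rw [← adjMat_diag_eq_idMat]; exact adjMat_mem_adjAlg hX.2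

lemma P0_eq_sum (hCC : IsCC ℛ) :
    P0 ℛ = ∑ X ∈ {X : Set V | IsFiber ℛ X}.toFinite.toFinset,
      (Nat.card X : ℂ)⁻¹ • Jmat X X := by
  ext u v
  rw [Matrix.sum_apply]
  by_cases h : ∃ Z : Set V, IsFiber ℛ Z ∧ u ∈ Z ∧ v ∈ Z
  · obtain ⟨Z, hZ, huZ, hvZ⟩ := h
    rw [P0_apply_of_mem hCC hZ huZ hvZ,
      Finset.sum_eq_single_of_mem Z (Set.Finite.mem_toFinset _ |>.mpr (by exact hZ))]
    · simp [Jmat, huZ, hvZ]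
    · intro Y hY hYne
      rw [Set.Finite.mem_toFinset] at hY
      have : ¬ (u ∈ Y ∧ v ∈ Y) := by
        rintro ⟨huY, -⟩
        exact hYne (fiber_eq_of_mem hCC hY hZ huY huZ)
      simp [Jmat, this]
  · rw [P0_apply_of_not h]
    symm
    apply Finset.sum_eq_zero
    intro Y hY
    rw [Set.Finite.mem_toFinset] at hY
    have : ¬ (u ∈ Y ∧ v ∈ Y) := fun hc => h ⟨Y, hY, hc.1, hc.2⟩
    simp [Jmat, this]

lemma P0_mem_adjAlg (hCC : IsCC ℛ) : P0 ℛ ∈ adjAlg ℛ := by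
  rw [P0_eq_sum hCC]
  refine Subalgebra.sum_mem _ fun X hX => ?_
  rw [Set.Finite.mem_toFinset] at hX
  have hX' : IsFiber ℛ X := hX
  exact Subalgebra.smul_mem _ (Jmat_mem_adjAlg hCC hX' hX') _

lemma P0_idem (hCC : IsCC ℛ) : P0 ℛ * P0 ℛ = P0 ℛ := by
  calc P0 ℛ * P0 ℛ
      = (∑ X ∈ {X : Set V | IsFiber ℛ X}.toFinite.toFinset,
          (Nat.card X : ℂ)⁻¹ • Jmat X X) * P0 ℛ := by rw [← P0_eq_sum hCC]
    _ = ∑ X ∈ {X : Set V | IsFiber ℛ X}.toFinite.toFinset,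
          (Nat.card X : ℂ)⁻¹ • Jmat X X := by
        rw [Finset.sum_mul]
        refine Finset.sum_congr rfl fun X hX => ?_
        rw [Set.Finite.mem_toFinset] at hX
        have hX' : IsFiber ℛ X := hX
        rw [Matrix.smul_mul, J_mul_P0 hCC hX' hX']
    _ = P0 ℛ := (P0_eq_sum hCC).symm

lemma P0_ne_zero [Nonempty V] (hCC : IsCC ℛ) : P0 ℛ ≠ 0 := by
  intro h
  obtain ⟨X, hX, hx⟩ := exists_fiber hCC (Classical.arbitrary V)
  have := P0_apply_of_mem hCC hX hx hx
  rw [h] at this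
  exact card_fiber_ne_zero hX (by simpa using this.symm)

lemma P0_row_eq (hCC : IsCC ℛ) {X : Set V} (hX : IsFiber ℛ X) {u u' : V}
    (hu : u ∈ X) (hu' : u' ∈ X) (w : V) : P0 ℛ u w = P0 ℛ u' w := by
  by_cases hw : w ∈ X
  · rw [P0_apply_of_mem hCC hX hu hw, P0_apply_of_mem hCC hX hu' hw]
  · rw [P0_apply_of_not, P0_apply_of_not]
    · rintro ⟨Z, hZ, huZ, hwZ⟩
      exact hw ((fiber_eq_of_mem hCC hZ hX huZ hu') ▸ hwZ)
    · rintro ⟨Z, hZ, huZ, hwZ⟩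
      exact hw ((fiber_eq_of_mem hCC hZ hX huZ hu) ▸ hwZ)

lemma P0_col_eq (hCC : IsCC ℛ) {X : Set V} (hX : IsFiber ℛ X) {v v' : V}
    (hv : v ∈ X) (hv' : v' ∈ X) (w : V) : P0 ℛ w v = P0 ℛ w v' := by
  by_cases hw : w ∈ X
  · rw [P0_apply_of_mem hCC hX hw hv, P0_apply_of_mem hCC hX hw hv']
  · rw [P0_apply_of_not, P0_apply_of_not]
    · rintro ⟨Z, hZ, hwZ, hvZ⟩
      exact hw ((fiber_eq_of_mem hCC hZ hX hvZ hv') ▸ hwZ)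
    · rintro ⟨Z, hZ, hwZ, hvZ⟩
      exact hw ((fiber_eq_of_mem hCC hZ hX hvZ hv) ▸ hwZ)

/-- the key structure lemma: a matrix commuting with the algebra and absorbed by `P0`
on both sides is a scalar multiple of `P0`. -/
lemma central_eq_smul_P0 [Nonempty V] (hCC : IsCC ℛ) {z : Matrix V V ℂ}
    (hcomm : ∀ a ∈ adjAlg ℛ, z * a = a * z)
    (hPz : P0 ℛ * z = z) (hzP : z * P0 ℛ = z) :
    ∃ c : ℂ, z = c • P0 ℛ := by
  classical
  -- (a) vanishing outside diagonal fiber blocks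
  have hoff : ∀ (X : Set V), IsFiber ℛ X → ∀ u v, u ∈ X → v ∉ X → z u v = 0 := by
    intro X hX u v hu hv
    have h := hcomm (idMat X) (idMat_mem_of_fiber hCC hX)
    have h' := congrFun (congrFun h u) v
    rw [mul_idMat_apply, idMat_mul_apply, if_neg hv, if_pos hu] at h'
    exact h'.symm
  -- (b) row and column constancy on fiber blocks
  have hrowc : ∀ (X : Set V), IsFiber ℛ X → ∀ u u' v, u ∈ X → u' ∈ X →
      z u v = z u' v := by
    intro X hX u u' v hu hu'
    rw [← hPz]
    show ∑ w, P0 ℛ u w * z w v = ∑ w, P0 ℛ u' w * z w v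
    exact Finset.sum_congr rfl fun w _ => by rw [P0_row_eq hCC hX hu hu' w]
  have hcolc : ∀ (X : Set V), IsFiber ℛ X → ∀ u v v', v ∈ X → v' ∈ X →
      z u v = z u v' := by
    intro X hX u v v' hv hv'
    rw [← hzP]
    show ∑ w, z u w * P0 ℛ w v = ∑ w, z u w * P0 ℛ w v'
    exact Finset.sum_congr rfl fun w _ => by rw [P0_col_eq hCC hX hv hv' w]
  -- (c) cross-fiber relation via all-ones blocks
  have hcross : ∀ (X Y : Set V), IsFiber ℛ X → IsFiber ℛ Y → ∀ x y, x ∈ X → y ∈ Y →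
      (Nat.card X : ℂ) * z x x = (Nat.card Y : ℂ) * z y y := by
    intro X Y hX hY x y hx hy
    have h := hcomm (Jmat X Y) (Jmat_mem_adjAlg hCC hX hY)
    have h' := congrFun (congrFun h x) y
    rw [Matrix.mul_apply, Matrix.mul_apply] at h'
    have l : ∑ w : V, z x w * Jmat X Y w y = (Nat.card X : ℂ) * z x x := by
      have : ∀ w : V, z x w * Jmat X Y w y = if w ∈ X then z x x else 0 := by
        intro w
        by_cases hw : w ∈ X
        · rw [if_pos hw]
          have : z x w = z x x := hcolc X hX x w x hw hx
          simp [Jmat, hw, hy, this]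
        · rw [if_neg hw]
          simp [Jmat, hw]
      rw [Finset.sum_congr rfl fun w _ => this w, sum_ite_mem_set]
    have r : ∑ w : V, Jmat X Y x w * z w y = (Nat.card Y : ℂ) * z y y := by
      have : ∀ w : V, Jmat X Y x w * z w y = if w ∈ Y then z y y else 0 := by
        intro w
        by_cases hw : w ∈ Y
        · rw [if_pos hw]
          have : z w y = z y y := hrowc Y hY w y y hw hy
          simp [Jmat, hw, hx, this]
        · rw [if_neg hw]
          simp [Jmat, hw]
      rw [Finset.sum_congr rfl fun w _ => this w, sum_ite_mem_set]
    rw [← l, ← r, h']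
  -- conclude
  obtain ⟨X₀, hX₀, hv₀⟩ := exists_fiber hCC (Classical.arbitrary V)
  refine ⟨(Nat.card X₀ : ℂ) * z (Classical.arbitrary V) (Classical.arbitrary V), ?_⟩
  ext u v
  by_cases h : ∃ Z : Set V, IsFiber ℛ Z ∧ u ∈ Z ∧ v ∈ Z
  · obtain ⟨Z, hZ, huZ, hvZ⟩ := h
    have h1 : z u v = z u u := hcolc Z hZ u v u hvZ huZ
    have h2 : (Nat.card Z : ℂ) * z u u
        = (Nat.card X₀ : ℂ) * z (Classical.arbitrary V) (Classical.arbitrary V) :=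
      hcross Z X₀ hZ hX₀ u (Classical.arbitrary V) huZ hv₀
    have hP : P0 ℛ u v = (Nat.card Z : ℂ)⁻¹ := P0_apply_of_mem hCC hZ huZ hvZ
    rw [Matrix.smul_apply, hP, h1, ← h2, smul_eq_mul]
    have : (Nat.card Z : ℂ) * z u u * (Nat.card Z : ℂ)⁻¹ = z u u := by
      rw [mul_comm, inv_mul_cancel_left₀ (card_fiber_ne_zero hZ)]
    exact this.symm
  · obtain ⟨X, hX, huX⟩ := exists_fiber hCC u
    have hvX : v ∉ X := fun hv => h ⟨X, hX, huX, hv⟩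
    rw [hoff X hX u v huX hvX, Matrix.smul_apply, P0_apply_of_not h, smul_zero]

lemma central_idem_eq_P0 [Nonempty V] (hCC : IsCC ℛ) {z : Matrix V V ℂ}
    (hcomm : ∀ a ∈ adjAlg ℛ, z * a = a * z)
    (hPz : P0 ℛ * z = z) (hzP : z * P0 ℛ = z) (hidem : z * z = z) :
    z = 0 ∨ z = P0 ℛ := by
  obtain ⟨c, rfl⟩ := central_eq_smul_P0 hCC hcomm hPz hzP
  have h : (c * c) • P0 ℛ = c • P0 ℛ := by
    rw [← hidem, Matrix.smul_mul, Matrix.mul_smul, P0_idem hCC, smul_smul]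
  have hc : c * c = c := by
    by_contra hc
    have := sub_eq_zero.mpr h
    rw [← sub_smul, smul_eq_zero] at this
    rcases this with h' | h'
    · exact hc (sub_eq_zero.mp h')
    · exact P0_ne_zero hCC h'
  have hfac : c * (c - 1) = 0 := by linear_combination hc
  rcases mul_eq_zero.mp hfac with h' | h'
  · left; rw [h', zero_smul]
  · right; rw [sub_eq_zero.mp h', one_smul]

end Aux4

section Aux5
variable {V : Type*} [Fintype V] [DecidableEq V]
variable {ℛ : Set (Set (V × V))}

lemma transp_subset {R : Set (V × V)} {X Y : Set V} (h : R ⊆ X ×ˢ Y) :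
    transp R ⊆ Y ×ˢ X := by
  rintro ⟨u, v⟩ huv
  have := h huv
  exact ⟨this.2, this.1⟩

lemma transp_transp (R : Set (V × V)) : transp (transp R) = R := rfl

lemma fiber_subset_or (hCC : IsCC ℛ) {U U' : Set V}
    (hU : IsFiberUnion ℛ U) (hU' : IsFiberUnion ℛ U')
    (hcover : U ∪ U' = Set.univ) {X : Set V} (hX : IsFiber ℛ X) :
    X ⊆ U ∨ X ⊆ U' := by
  obtain ⟨x, hx⟩ := hX.1
  have : x ∈ U ∪ U' := hcover ▸ Set.mem_univ x
  rcases this with h | h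
  · exact Or.inl (fiber_subset_of_fiberUnion hCC hU hX hx h)
  · exact Or.inr (fiber_subset_of_fiberUnion hCC hU' hX hx h)

lemma idMat_mul_idMat_disj {U U' : Set V} (hdisj : Disjoint U U') :
    idMat U * idMat (U' : Set V) = 0 := by
  ext u v
  rw [idMat_mul_apply]
  by_cases h : u ∈ U
  · rw [if_pos h]
    have : u ∉ U' := fun h' => Set.disjoint_left.mp hdisj h h'
    by_cases huv : u = v
    · subst huv; simp [idMat, this]
    · simp [idMat, fun hh : u = v => huv hh]
  · rw [if_neg h]; simp

lemma idMat_mul_idMat_self (W : Set V) : idMat W * idMat W = idMat W := by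
  ext u v
  rw [idMat_mul_apply]
  by_cases h : u ∈ W
  · rw [if_pos h]
  · rw [if_neg h]
    exact (if_neg fun hh : u = v ∧ u ∈ W => h hh.2).symm

lemma idMat_add_eq_one {U U' : Set V} (hdisj : Disjoint U U')
    (hcover : U ∪ U' = Set.univ) : idMat U + idMat U' = (1 : Matrix V V ℂ) := by
  ext u v
  by_cases huv : u = v
  · subst huv
    have : u ∈ U ∪ U' := hcover ▸ Set.mem_univ u
    rcases this with h | h
    · have h' : u ∉ U' := fun h' => Set.disjoint_left.mp hdisj h h'
      simp [idMat, Matrix.one_apply, h, h']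
    · have h' : u ∉ U := fun h' => Set.disjoint_left.mp hdisj h' h
      simp [idMat, Matrix.one_apply, h, h']
  · simp [idMat, Matrix.one_apply, huv, fun hh : u = v ∧ _ => huv hh.1]

lemma idMat_mul_adjMat_of_fst {W : Set V} {R : Set (V × V)}
    (h : ∀ p ∈ R, p.1 ∈ W) : idMat W * adjMat R = adjMat R := by
  ext u v
  rw [idMat_mul_apply]
  by_cases hu : u ∈ W
  · rw [if_pos hu]
  · rw [if_neg hu]
    have : (u, v) ∉ R := fun hc => hu (h (u, v) hc)
    simp [adjMat, this]

lemma idMat_mul_adjMat_of_not_fst {W : Set V} {R : Set (V × V)}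
    (h : ∀ p ∈ R, p.1 ∉ W) : idMat W * adjMat R = 0 := by
  ext u v
  rw [idMat_mul_apply]
  by_cases hu : u ∈ W
  · rw [if_pos hu]
    have : (u, v) ∉ R := fun hc => h (u, v) hc hu
    simp [adjMat, this]
  · rw [if_neg hu]; simp

lemma adjMat_mul_idMat_of_snd {W : Set V} {R : Set (V × V)}
    (h : ∀ p ∈ R, p.2 ∈ W) : adjMat R * idMat W = adjMat R := by
  ext u v
  rw [mul_idMat_apply]
  by_cases hv : v ∈ W
  · rw [if_pos hv]
  · rw [if_neg hv]
    have : (u, v) ∉ R := fun hc => hv (h (u, v) hc)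
    simp [adjMat, this]

lemma adjMat_mul_idMat_of_not_snd {W : Set V} {R : Set (V × V)}
    (h : ∀ p ∈ R, p.2 ∉ W) : adjMat R * idMat W = 0 := by
  ext u v
  rw [mul_idMat_apply]
  by_cases hv : v ∈ W
  · rw [if_pos hv]
    have : (u, v) ∉ R := fun hc => h (u, v) hc hv
    simp [adjMat, this]
  · rw [if_neg hv]; simp

lemma adjMat_prod_eq_Jmat (X Y : Set V) : adjMat (X ×ˢ Y) = Jmat X Y := by
  ext u v
  simp [adjMat, Jmat, Set.mem_prod]

lemma rel_eq_block_of_card_one (hCC : IsCC ℛ) {X Y : Set V}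
    (hX : IsFiber ℛ X) (hY : IsFiber ℛ Y)
    (hcard : Nat.card (relsBtw ℛ X Y) = 1) {R : Set (V × V)} (hR : R ∈ ℛ)
    (hsub : R ⊆ X ×ˢ Y) : R = X ×ˢ Y := by
  obtain ⟨a, ha⟩ := Nat.card_eq_one_iff_exists.mp hcard
  apply Set.Subset.antisymm hsub
  rintro ⟨x, y⟩ ⟨hx, hy⟩
  obtain ⟨S, hS, hxyS⟩ := exists_rel hCC (x, y)
  have hSsub : S ⊆ X ×ˢ Y := rel_subset_block hCC hS hX hY hxyS hx hy
  have h1 : (⟨S, hS, hSsub⟩ : relsBtw ℛ X Y) = a := ha _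
  have h2 : (⟨R, hR, hsub⟩ : relsBtw ℛ X Y) = a := ha _
  have : S = R := by
    have := h1.trans h2.symm
    exact congrArg Subtype.val this
  exact this ▸ hxyS

/-- dichotomy for central primitive idempotents versus the principal one -/
lemma CPI_P0_cases [Nonempty V] (hCC : IsCC ℛ) {P : Matrix V V ℂ}
    (hP : IsCPIin (adjAlg ℛ : Set (Matrix V V ℂ)) P) : P * P0 ℛ = 0 ∨ P = P0 ℛ := by
  obtain ⟨hPmem, hPne, hPidem, hPcen, hPprim⟩ := hP
  rw [SetLike.mem_coe] at hPmem
  have hP0mem : P0 ℛ ∈ adjAlg ℛ := P0_mem_adjAlg hCC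
  have hswap : P * P0 ℛ = P0 ℛ * P := hPcen (P0 ℛ) hP0mem
  have hac : ∀ b ∈ adjAlg ℛ, (P * P0 ℛ) * b = b * (P * P0 ℛ) := by
    intro b hb
    rw [mul_assoc, P0_central hCC b hb, ← mul_assoc, hPcen b hb, mul_assoc]
  have haP0 : (P * P0 ℛ) * P0 ℛ = P * P0 ℛ := by rw [mul_assoc, P0_idem hCC]
  have hP0a : P0 ℛ * (P * P0 ℛ) = P * P0 ℛ := by rw [← mul_assoc, ← hswap, mul_assoc, P0_idem hCC]
  have haa : (P * P0 ℛ) * (P * P0 ℛ) = P * P0 ℛ := by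
    rw [mul_assoc, hP0a, ← mul_assoc, hPidem]
  rcases central_idem_eq_P0 hCC hac hP0a haP0 haa with h | h
  · exact Or.inl h
  · -- P * P0 = P0, so split P = P0 + (P - P0) and use primitivity
    right
    have h1 : P * P0 ℛ = P0 ℛ := h
    have h2 : P0 ℛ * P = P0 ℛ := hswap ▸ h1
    have key := hPprim (P0 ℛ) (P - P0 ℛ) (SetLike.mem_coe.mpr hP0mem)
      (SetLike.mem_coe.mpr (Subalgebra.sub_mem _ hPmem hP0mem))
      (P0_idem hCC)
      (by rw [sub_mul, mul_sub, mul_sub, hPidem, h1, h2, P0_idem hCC, sub_self, sub_zero])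
      (fun M hM => P0_central hCC M (SetLike.mem_coe.mp hM))
      (fun M hM => by
        rw [sub_mul, mul_sub, hPcen M hM, P0_central hCC M (SetLike.mem_coe.mp hM)])
      (by rw [mul_sub, h2, P0_idem hCC, sub_self])
      (by rw [sub_mul, h1, P0_idem hCC, sub_self])
      (by abel)
    rcases key with h' | h'
    · exact absurd h' (P0_ne_zero hCC)
    · have := sub_eq_zero.mp h'
      exact this

lemma P0_isCPI [Nonempty V] (hCC : IsCC ℛ) :
    IsCPIin (adjAlg ℛ : Set (Matrix V V ℂ)) (P0 ℛ) := by
  refine ⟨SetLike.mem_coe.mpr (P0_mem_adjAlg hCC), P0_ne_zero hCC, P0_idem hCC,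
    fun Q hQ => P0_central hCC Q (SetLike.mem_coe.mp hQ), ?_⟩
  intro Q₁ Q₂ hQ₁ hQ₂ hi₁ hi₂ hc₁ hc₂ ho₁ ho₂ hsum
  have hQ₁P0 : Q₁ * P0 ℛ = Q₁ := by rw [hsum, mul_add, hi₁, ho₁, add_zero]
  have hP0Q₁ : P0 ℛ * Q₁ = Q₁ := by rw [hsum, add_mul, hi₁, ho₂, add_zero]
  have hc₁' : ∀ b ∈ adjAlg ℛ, Q₁ * b = b * Q₁ := fun b hb => hc₁ b (SetLike.mem_coe.mpr hb)
  rcases central_idem_eq_P0 hCC hc₁' hP0Q₁ hQ₁P0 hi₁ with h | h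
  · exact Or.inl h
  · right
    have : P0 ℛ = P0 ℛ + Q₂ := h ▸ hsum
    have := (left_eq_add.mp this)
    exact this

lemma P0_mul_idMat_ne_zero [Nonempty V] (hCC : IsCC ℛ) {W : Set V} (hWne : W.Nonempty) :
    P0 ℛ * idMat W ≠ 0 := by
  obtain ⟨x, hx⟩ := hWne
  obtain ⟨X, hX, hxX⟩ := exists_fiber hCC x
  intro h
  have := congrFun (congrFun h x) x
  rw [mul_idMat_apply, if_pos hx, P0_apply_of_mem hCC hX hxX hxX] at this
  exact card_fiber_ne_zero hX (by simpa using this)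

end Aux5

section Aux6
variable {V : Type*} [Fintype V] [DecidableEq V]
variable {ℛ : Set (Set (V × V))}

lemma dir_forward [Nonempty V] (hCC : IsCC ℛ) {U U' : Set V}
    (hU : IsFiberUnion ℛ U) (hU' : IsFiberUnion ℛ U')
    (hUne : U.Nonempty) (hU'ne : U'.Nonempty)
    (hdisj : Disjoint U U') (hcover : U ∪ U' = Set.univ)
    (hLHS : ∀ X Y : Set V, IsFiber ℛ X → IsFiber ℛ Y → X ⊆ U → Y ⊆ U' →
      Nat.card (relsBtw ℛ X Y) = 1) :
    {P ∈ CPIs ℛ | P * idMat U ≠ 0 ∧ P * idMat U' ≠ 0} = {P0 ℛ} := by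
  ext P
  simp only [Set.mem_setOf_eq, Set.mem_singleton_iff, CPIs]
  constructor
  · rintro ⟨hP, hPU, hPU'⟩
    rcases CPI_P0_cases hCC hP with hPP0 | h
    · exfalso
      obtain ⟨hPmem, hPne, hPidem, hPcen, hPprim⟩ := hP
      have hPmem' : P ∈ adjAlg ℛ := SetLike.mem_coe.mp hPmem
      have hPcen' : ∀ a ∈ adjAlg ℛ, P * a = a * P :=
        fun a ha => hPcen a (SetLike.mem_coe.mpr ha)
      have hJann : ∀ X Y : Set V, IsFiber ℛ X → IsFiber ℛ Y →
          P * Jmat X Y = 0 ∧ Jmat X Y * P = 0 := by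
        intro X Y hX hY
        constructor
        · rw [← P0_mul_J hCC hX hY, ← mul_assoc, hPP0, zero_mul]
        · have hP0P : P0 ℛ * P = 0 := by
            rw [P0_central hCC P hPmem']; exact hPP0
          rw [← J_mul_P0 hCC hX hY, mul_assoc, hP0P, mul_zero]
      have hcase : ∀ R ∈ ℛ,
          ((P * idMat U) * adjMat R = adjMat R * (P * idMat U)) ∧
          ((P * idMat U') * adjMat R = adjMat R * (P * idMat U')) := by
        intro R hR
        obtain ⟨⟨x₀, y₀⟩, hp0⟩ := hCC.1 R hR
        obtain ⟨X, hX, hx₀⟩ := exists_fiber hCC x₀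
        obtain ⟨Y, hY, hy₀⟩ := exists_fiber hCC y₀
        have hsub : R ⊆ X ×ˢ Y := rel_subset_block hCC hR hX hY hp0 hx₀ hy₀
        have hfst : ∀ p ∈ R, p.1 ∈ X := fun p hp => (hsub hp).1
        have hsnd : ∀ p ∈ R, p.2 ∈ Y := fun p hp => (hsub hp).2
        have hPA : P * adjMat R = adjMat R * P := hPcen' _ (adjMat_mem_adjAlg hR)
        rcases fiber_subset_or hCC hU hU' hcover hX with hXU | hXU'
        · rcases fiber_subset_or hCC hU hU' hcover hY with hYU | hYU'
          · -- both in U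
            have hIA : idMat U * adjMat R = adjMat R :=
              idMat_mul_adjMat_of_fst (fun p hp => hXU (hfst p hp))
            have hAI : adjMat R * idMat U = adjMat R :=
              adjMat_mul_idMat_of_snd (fun p hp => hYU (hsnd p hp))
            have hIA' : idMat U' * adjMat R = 0 :=
              idMat_mul_adjMat_of_not_fst
                (fun p hp hc => Set.disjoint_left.mp hdisj (hXU (hfst p hp)) hc)
            have hAI' : adjMat R * idMat U' = 0 :=
              adjMat_mul_idMat_of_not_snd
                (fun p hp hc => Set.disjoint_left.mp hdisj (hYU (hsnd p hp)) hc)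
            constructor
            · rw [mul_assoc, hIA, ← mul_assoc, ← hPA, mul_assoc, hAI]
            · rw [mul_assoc, hIA', mul_zero, ← mul_assoc, ← hPA, mul_assoc, hAI', mul_zero]
          · -- cross X ⊆ U, Y ⊆ U'
            have hA : adjMat R = Jmat X Y := by
              rw [rel_eq_block_of_card_one hCC hX hY (hLHS X Y hX hY hXU hYU') hR hsub,
                adjMat_prod_eq_Jmat]
            have hPA0 : P * adjMat R = 0 := by rw [hA]; exact (hJann X Y hX hY).1
            have hAP0 : adjMat R * P = 0 := by rw [hA]; exact (hJann X Y hX hY).2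
            have hIA : idMat U * adjMat R = adjMat R :=
              idMat_mul_adjMat_of_fst (fun p hp => hXU (hfst p hp))
            have hIA' : idMat U' * adjMat R = 0 :=
              idMat_mul_adjMat_of_not_fst
                (fun p hp hc => Set.disjoint_left.mp hdisj (hXU (hfst p hp)) hc)
            constructor
            · rw [mul_assoc, hIA, hPA0, ← mul_assoc, hAP0, zero_mul]
            · rw [mul_assoc, hIA', mul_zero, ← mul_assoc, hAP0, zero_mul]
        · rcases fiber_subset_or hCC hU hU' hcover hY with hYU | hYU'
          · -- cross X ⊆ U', Y ⊆ U
            have hT : transp R ∈ ℛ := hCC.2.2.2.1 R hR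
            have htsub : transp R ⊆ Y ×ˢ X := transp_subset hsub
            have hTeq : transp R = Y ×ˢ X :=
              rel_eq_block_of_card_one hCC hY hX (hLHS Y X hY hX hYU hXU') hT htsub
            have hReq : R = X ×ˢ Y := by
              ext ⟨u, v⟩
              constructor
              · intro hm
                have h1 : ((v, u) : V × V) ∈ transp R := hm
                rw [hTeq] at h1
                exact ⟨h1.2, h1.1⟩
              · rintro ⟨hu, hv⟩
                have h1 : ((v, u) : V × V) ∈ Y ×ˢ X := ⟨hv, hu⟩
                rw [← hTeq] at h1
                exact h1
            have hA : adjMat R = Jmat X Y := by rw [hReq, adjMat_prod_eq_Jmat]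
            have hPA0 : P * adjMat R = 0 := by rw [hA]; exact (hJann X Y hX hY).1
            have hAP0 : adjMat R * P = 0 := by rw [hA]; exact (hJann X Y hX hY).2
            have hIA : idMat U * adjMat R = 0 :=
              idMat_mul_adjMat_of_not_fst
                (fun p hp hc => Set.disjoint_left.mp hdisj hc (hXU' (hfst p hp)))
            have hIA' : idMat U' * adjMat R = adjMat R :=
              idMat_mul_adjMat_of_fst (fun p hp => hXU' (hfst p hp))
            constructor
            · rw [mul_assoc, hIA, mul_zero, ← mul_assoc, hAP0, zero_mul]
            · rw [mul_assoc, hIA', hPA0, ← mul_assoc, hAP0, zero_mul]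
          · -- both in U'
            have hIA : idMat U' * adjMat R = adjMat R :=
              idMat_mul_adjMat_of_fst (fun p hp => hXU' (hfst p hp))
            have hAI : adjMat R * idMat U' = adjMat R :=
              adjMat_mul_idMat_of_snd (fun p hp => hYU' (hsnd p hp))
            have hIA0 : idMat U * adjMat R = 0 :=
              idMat_mul_adjMat_of_not_fst
                (fun p hp hc => Set.disjoint_left.mp hdisj hc (hXU' (hfst p hp)))
            have hAI0 : adjMat R * idMat U = 0 :=
              adjMat_mul_idMat_of_not_snd
                (fun p hp hc => Set.disjoint_left.mp hdisj hc (hYU' (hsnd p hp)))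
            constructor
            · rw [mul_assoc, hIA0, mul_zero, ← mul_assoc, ← hPA, mul_assoc, hAI0, mul_zero]
            · rw [mul_assoc, hIA, ← mul_assoc, ← hPA, mul_assoc, hAI]
      have hcenU := commute_adjAlg (ℛ := ℛ) (fun R hR => (hcase R hR).1)
      have hcenU' := commute_adjAlg (ℛ := ℛ) (fun R hR => (hcase R hR).2)
      have hIU : idMat U ∈ adjAlg ℛ := idMat_mem_adjAlg hCC hU
      have hIU' : idMat U' ∈ adjAlg ℛ := idMat_mem_adjAlg hCC hU'
      have hcomU : P * idMat U = idMat U * P := hPcen' _ hIU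
      have hcomU' : P * idMat U' = idMat U' * P := hPcen' _ hIU'
      have h1 : idMat U * (P * idMat U) = P * idMat U := by
        rw [← mul_assoc, ← hcomU, mul_assoc, idMat_mul_idMat_self]
      have h1' : idMat U' * (P * idMat U') = P * idMat U' := by
        rw [← mul_assoc, ← hcomU', mul_assoc, idMat_mul_idMat_self]
      have hq1 : (P * idMat U) * (P * idMat U) = P * idMat U := by
        rw [mul_assoc, h1, ← mul_assoc, hPidem]
      have hq2 : (P * idMat U') * (P * idMat U') = P * idMat U' := by
        rw [mul_assoc, h1', ← mul_assoc, hPidem]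
      have h2 : idMat U * (P * idMat U') = P * (idMat U * idMat U') := by
        rw [← mul_assoc, ← hcomU, mul_assoc]
      have h2' : idMat U' * (P * idMat U) = P * (idMat U' * idMat U) := by
        rw [← mul_assoc, ← hcomU', mul_assoc]
      have ho12 : (P * idMat U) * (P * idMat U') = 0 := by
        rw [mul_assoc, h2, idMat_mul_idMat_disj hdisj, mul_zero, mul_zero]
      have ho21 : (P * idMat U') * (P * idMat U) = 0 := by
        rw [mul_assoc, h2', idMat_mul_idMat_disj hdisj.symm, mul_zero, mul_zero]
      have hsum : P = P * idMat U + P * idMat U' := by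
        rw [← mul_add, idMat_add_eq_one hdisj hcover, mul_one]
      have key := hPprim (P * idMat U) (P * idMat U')
        (SetLike.mem_coe.mpr (mul_mem hPmem' hIU))
        (SetLike.mem_coe.mpr (mul_mem hPmem' hIU'))
        hq1 hq2
        (fun M hM => hcenU M (SetLike.mem_coe.mp hM))
        (fun M hM => hcenU' M (SetLike.mem_coe.mp hM))
        ho12 ho21 hsum
      rcases key with h | h
      · exact hPU h
      · exact hPU' h
    · exact h
  · rintro rfl
    exact ⟨P0_isCPI hCC, P0_mul_idMat_ne_zero hCC hUne, P0_mul_idMat_ne_zero hCC hU'ne⟩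

end Aux6

section Aux7
variable {V : Type*} [Fintype V] [DecidableEq V]

/-- The module of central elements of the adjacency algebra absorbed by `e`. -/
noncomputable def centSub (ℛ : Set (Set (V × V))) (e : Matrix V V ℂ) :
    Submodule ℂ (Matrix V V ℂ) where
  carrier := {z | z ∈ adjAlg ℛ ∧ (∀ a ∈ adjAlg ℛ, z * a = a * z) ∧ z * e = z}
  add_mem' := by
    rintro z w ⟨hz1, hz2, hz3⟩ ⟨hw1, hw2, hw3⟩
    refine ⟨add_mem hz1 hw1, fun a ha => ?_, by rw [add_mul, hz3, hw3]⟩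
    rw [add_mul, mul_add, hz2 a ha, hw2 a ha]
  zero_mem' := ⟨zero_mem _, fun a _ => by rw [zero_mul, mul_zero], zero_mul e⟩
  smul_mem' := by
    rintro c z ⟨hz1, hz2, hz3⟩
    refine ⟨Subalgebra.smul_mem _ hz1 c, fun a ha => ?_, by rw [smul_mul_assoc, hz3]⟩
    rw [smul_mul_assoc, mul_smul_comm, hz2 a ha]

variable {ℛ : Set (Set (V × V))}

lemma decomp_aux : ∀ (n : ℕ) (e : Matrix V V ℂ), e ∈ adjAlg ℛ → e * e = e →
    (∀ a ∈ adjAlg ℛ, e * a = a * e) → Module.finrank ℂ (centSub ℛ e) < n →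
    ∃ P : Finset (Matrix V V ℂ),
      (∀ p ∈ P, IsCPIin (adjAlg ℛ : Set (Matrix V V ℂ)) p ∧ p * e = p) ∧
      (∀ p ∈ P, ∀ q ∈ P, p ≠ q → p * q = 0) ∧ ∑ p ∈ P, p = e := by
  intro n
  induction n with
  | zero => intro e _ _ _ h; exact absurd h (Nat.not_lt_zero _)
  | succ n ih =>
    intro e he hidem hcen hrank
    by_cases he0 : e = 0
    · exact ⟨∅, by simp, by simp, by simp [he0]⟩
    by_cases hprim : ∀ Q₁ Q₂ : Matrix V V ℂ,
        Q₁ ∈ (adjAlg ℛ : Set (Matrix V V ℂ)) → Q₂ ∈ (adjAlg ℛ : Set (Matrix V V ℂ)) →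
        Q₁ * Q₁ = Q₁ → Q₂ * Q₂ = Q₂ →
        (∀ M ∈ (adjAlg ℛ : Set (Matrix V V ℂ)), Q₁ * M = M * Q₁) →
        (∀ M ∈ (adjAlg ℛ : Set (Matrix V V ℂ)), Q₂ * M = M * Q₂) →
        Q₁ * Q₂ = 0 → Q₂ * Q₁ = 0 → e = Q₁ + Q₂ → Q₁ = 0 ∨ Q₂ = 0
    · refine ⟨{e}, ?_, ?_, Finset.sum_singleton _ _⟩
      · intro p hp
        rw [Finset.mem_singleton] at hp
        subst hp
        exact ⟨⟨SetLike.mem_coe.mpr he, he0, hidem,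
          fun Q hQ => hcen Q (SetLike.mem_coe.mp hQ), hprim⟩, hidem⟩
      · intro p hp q hq hne
        rw [Finset.mem_singleton] at hp hq
        exact absurd (hp.trans hq.symm) hne
    · push_neg at hprim
      obtain ⟨Q₁, Q₂, h₁, h₂, hi₁, hi₂, hc₁, hc₂, ho₁, ho₂, hsum, hn₁, hn₂⟩ := hprim
      have h₁' : Q₁ ∈ adjAlg ℛ := SetLike.mem_coe.mp h₁
      have h₂' : Q₂ ∈ adjAlg ℛ := SetLike.mem_coe.mp h₂
      have hc₁' : ∀ a ∈ adjAlg ℛ, Q₁ * a = a * Q₁ := fun a ha => hc₁ a (SetLike.mem_coe.mpr ha)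
      have hc₂' : ∀ a ∈ adjAlg ℛ, Q₂ * a = a * Q₂ := fun a ha => hc₂ a (SetLike.mem_coe.mpr ha)
      have hQ₁e : Q₁ * e = Q₁ := by rw [hsum, mul_add, hi₁, ho₁, add_zero]
      have hQ₂e : Q₂ * e = Q₂ := by rw [hsum, mul_add, hi₂, ho₂, zero_add]
      -- strict submodule inclusions
      have hltfactory : ∀ (Qa Qb : Matrix V V ℂ), Qa ∈ adjAlg ℛ → Qb ∈ adjAlg ℛ →
          (∀ a ∈ adjAlg ℛ, Qb * a = a * Qb) →
          Qa * e = Qa → Qb * e = Qb → Qb * Qa = 0 → Qb ≠ 0 →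
          centSub ℛ Qa < centSub ℛ e := by
        intro Qa Qb hQa hQb hcb hQae hQbe horth hbne
        constructor
        · rintro z ⟨hz1, hz2, hz3⟩
          exact ⟨hz1, hz2, by rw [← hz3, mul_assoc, hQae]⟩
        · intro hle
          have hmem : Qb ∈ centSub ℛ e := ⟨hQb, hcb, hQbe⟩
          have := hle hmem
          obtain ⟨-, -, habs⟩ := this
          rw [horth] at habs
          exact hbne habs.symm
      have hlt₁ : centSub ℛ Q₁ < centSub ℛ e :=
        hltfactory Q₁ Q₂ h₁' h₂' hc₂' hQ₁e hQ₂e ho₂ hn₂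
      have hlt₂ : centSub ℛ Q₂ < centSub ℛ e :=
        hltfactory Q₂ Q₁ h₂' h₁' hc₁' hQ₂e hQ₁e ho₁ hn₁
      have hr₁ : Module.finrank ℂ (centSub ℛ Q₁) < n :=
        lt_of_lt_of_le (Submodule.finrank_lt_finrank_of_lt hlt₁) (Nat.lt_succ_iff.mp hrank)
      have hr₂ : Module.finrank ℂ (centSub ℛ Q₂) < n :=
        lt_of_lt_of_le (Submodule.finrank_lt_finrank_of_lt hlt₂) (Nat.lt_succ_iff.mp hrank)
      obtain ⟨P₁, hP₁, horth₁, hsum₁⟩ := ih Q₁ h₁' hi₁ hc₁' hr₁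
      obtain ⟨P₂, hP₂, horth₂, hsum₂⟩ := ih Q₂ h₂' hi₂ hc₂' hr₂
      have habs₁ : ∀ p ∈ P₁, p * Q₂ = 0 := by
        intro p hp
        have h := (hP₁ p hp).2
        rw [← h, mul_assoc, ho₁, mul_zero]
      have habs₂ : ∀ p ∈ P₂, p * Q₁ = 0 := by
        intro p hp
        have h := (hP₂ p hp).2
        rw [← h, mul_assoc, ho₂, mul_zero]
      have hdisjP : Disjoint P₁ P₂ := by
        rw [Finset.disjoint_left]
        intro p hp1 hp2
        have h0 := habs₂ p hp2
        have := (hP₁ p hp1).2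
        have hpe : p * Q₁ = p := (hP₁ p hp1).2
        exact (hP₁ p hp1).1.2.1 (hpe ▸ h0)
      refine ⟨P₁ ∪ P₂, ?_, ?_, ?_⟩
      · intro p hp
        rcases Finset.mem_union.mp hp with hp | hp
        · refine ⟨(hP₁ p hp).1, ?_⟩
          rw [hsum, mul_add, (hP₁ p hp).2, habs₁ p hp, add_zero]
        · refine ⟨(hP₂ p hp).1, ?_⟩
          rw [hsum, mul_add, (hP₂ p hp).2, habs₂ p hp, zero_add]
      · intro p hp q hq hne
        rcases Finset.mem_union.mp hp with hp | hp <;>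
          rcases Finset.mem_union.mp hq with hq | hq
        · exact horth₁ p hp q hq hne
        · -- p ∈ P₁, q ∈ P₂
          have hq2 : q * Q₂ = q := (hP₂ q hq).2
          have hqc : q * Q₂ = Q₂ * q := (hP₂ q hq).1.2.2.2.1 Q₂ h₂
          have hQ₂q : Q₂ * q = q := by rw [← hqc, hq2]
          have hp1 : p * Q₁ = p := (hP₁ p hp).2
          calc p * q = (p * Q₁) * (Q₂ * q) := by rw [hp1, hQ₂q]
            _ = p * (Q₁ * Q₂) * q := by rw [mul_assoc, mul_assoc, mul_assoc]
            _ = 0 := by rw [ho₁, mul_zero, zero_mul]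
        · -- p ∈ P₂, q ∈ P₁
          have hq2 : q * Q₁ = q := (hP₁ q hq).2
          have hqc : q * Q₁ = Q₁ * q := (hP₁ q hq).1.2.2.2.1 Q₁ h₁
          have hQ₁q : Q₁ * q = q := by rw [← hqc, hq2]
          have hp1 : p * Q₂ = p := (hP₂ p hp).2
          calc p * q = (p * Q₂) * (Q₁ * q) := by rw [hp1, hQ₁q]
            _ = p * (Q₂ * Q₁) * q := by rw [mul_assoc, mul_assoc, mul_assoc]
            _ = 0 := by rw [ho₂, mul_zero, zero_mul]
        · exact horth₂ p hp q hq hne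
      · rw [Finset.sum_union hdisjP, hsum₁, hsum₂, hsum]

/-- decomposition of the identity into pairwise orthogonal central primitive idempotents -/
lemma decomp_one :
    ∃ P : Finset (Matrix V V ℂ),
      (∀ p ∈ P, IsCPIin (adjAlg ℛ : Set (Matrix V V ℂ)) p) ∧
      (∀ p ∈ P, ∀ q ∈ P, p ≠ q → p * q = 0) ∧ ∑ p ∈ P, p = (1 : Matrix V V ℂ) := by
  obtain ⟨P, h1, h2, h3⟩ := decomp_aux (ℛ := ℛ) (Module.finrank ℂ (centSub ℛ 1) + 1) 1
    (one_mem _) (one_mul 1) (fun a _ => by rw [one_mul, mul_one]) (Nat.lt_succ_self _)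
  exact ⟨P, fun p hp => (h1 p hp).1, h2, h3⟩

end Aux7

section Aux8
variable {V : Type*} [Fintype V] [DecidableEq V]
variable {ℛ : Set (Set (V × V))}

lemma absorb_row_const (hCC : IsCC ℛ) {M : Matrix V V ℂ} (hM : P0 ℛ * M = M)
    {X : Set V} (hX : IsFiber ℛ X) {u u' : V} (hu : u ∈ X) (hu' : u' ∈ X) (v : V) :
    M u v = M u' v := by
  rw [← hM]
  show ∑ w, P0 ℛ u w * M w v = ∑ w, P0 ℛ u' w * M w v
  exact Finset.sum_congr rfl fun w _ => by rw [P0_row_eq hCC hX hu hu' w]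

lemma absorb_col_const (hCC : IsCC ℛ) {M : Matrix V V ℂ} (hM : M * P0 ℛ = M)
    {X : Set V} (hX : IsFiber ℛ X) {v v' : V} (hv : v ∈ X) (hv' : v' ∈ X) (u : V) :
    M u v = M u v' := by
  rw [← hM]
  show ∑ w, M u w * P0 ℛ w v = ∑ w, M u w * P0 ℛ w v'
  exact Finset.sum_congr rfl fun w _ => by rw [P0_col_eq hCC hX hv hv' w]

lemma dir_backward [Nonempty V] (hCC : IsCC ℛ) {U U' : Set V}
    (hU : IsFiberUnion ℛ U) (hU' : IsFiberUnion ℛ U')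
    (hdisj : Disjoint U U') (hcover : U ∪ U' = Set.univ)
    (hRHS : {P ∈ CPIs ℛ | P * idMat U ≠ 0 ∧ P * idMat U' ≠ 0} = {P0 ℛ}) :
    ∀ X Y : Set V, IsFiber ℛ X → IsFiber ℛ Y → X ⊆ U → Y ⊆ U' →
      Nat.card (relsBtw ℛ X Y) = 1 := by
  intro X Y hX hY hXU hYU'
  obtain ⟨x, hx⟩ := hX.1
  obtain ⟨y, hy⟩ := hY.1
  obtain ⟨R, hR, hxy⟩ := exists_rel hCC (x, y)
  have hsub : R ⊆ X ×ˢ Y := rel_subset_block hCC hR hX hY hxy hx hy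
  obtain ⟨Ps, hPs, horth, hsum1⟩ := decomp_one (ℛ := ℛ)
  have hzero : ∀ p ∈ Ps, p ≠ P0 ℛ → p * adjMat R = 0 ∧ adjMat R * p = 0 := by
    intro p hp hne
    obtain ⟨hpmem, hpne, hpidem, hpcen, -⟩ := hPs p hp
    have hpmem' : p ∈ adjAlg ℛ := SetLike.mem_coe.mp hpmem
    have hpcen' : ∀ a ∈ adjAlg ℛ, p * a = a * p := fun a ha => hpcen a (SetLike.mem_coe.mpr ha)
    have hpA : p * adjMat R = adjMat R * p := hpcen' _ (adjMat_mem_adjAlg hR)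
    have hor : p * idMat U = 0 ∨ p * idMat U' = 0 := by
      by_contra hc
      push_neg at hc
      have hmem : p ∈ {P ∈ CPIs ℛ | P * idMat U ≠ 0 ∧ P * idMat U' ≠ 0} :=
        ⟨hPs p hp, hc.1, hc.2⟩
      rw [hRHS] at hmem
      exact hne hmem
    have hsplit : p = p * idMat U + p * idMat U' := by
      rw [← mul_add, idMat_add_eq_one hdisj hcover, mul_one]
    rcases hor with h0 | h0
    · have hp' : p = p * idMat U' := by
        conv_lhs => rw [hsplit]
        rw [h0, zero_add]
      have hIA : idMat U' * adjMat R = 0 :=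
        idMat_mul_adjMat_of_not_fst
          (fun q hq hc => Set.disjoint_left.mp hdisj (hXU (hsub hq).1) hc)
      have h1 : p * adjMat R = 0 := by rw [hp', mul_assoc, hIA, mul_zero]
      exact ⟨h1, by rw [← hpA, h1]⟩
    · have hp' : p = p * idMat U := by
        conv_lhs => rw [hsplit]
        rw [h0, add_zero]
      have hpl : p = idMat U * p := by
        conv_lhs => rw [hp']
        exact hpcen' _ (idMat_mem_adjAlg hCC hU)
      have hAI : adjMat R * idMat U = 0 :=
        adjMat_mul_idMat_of_not_snd
          (fun q hq hc => Set.disjoint_left.mp hdisj hc (hYU' (hsub hq).2))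
      have h1 : adjMat R * p = 0 := by
        conv_lhs => rw [hpl]
        rw [← mul_assoc, hAI, zero_mul]
      exact ⟨by rw [hpA, h1], h1⟩
  have hA1 : adjMat R = ∑ p ∈ Ps, p * adjMat R := by
    rw [← Finset.sum_mul, hsum1, one_mul]
  have hAx : adjMat R x y = 1 := by simp [adjMat, hxy]
  by_cases hP0in : P0 ℛ ∈ Ps
  · have hPA : adjMat R = P0 ℛ * adjMat R := by
      conv_lhs => rw [hA1]
      exact Finset.sum_eq_single_of_mem (P0 ℛ) hP0in (fun p hp hpne => (hzero p hp hpne).1)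
    have hAP : adjMat R = adjMat R * P0 ℛ := by
      rw [← P0_central hCC _ (adjMat_mem_adjAlg hR), ← hPA]
    have hfull : R = X ×ˢ Y := by
      apply Set.Subset.antisymm hsub
      rintro ⟨u, v⟩ ⟨hu, hv⟩
      have e1 : adjMat R u v = adjMat R x v := absorb_row_const hCC hPA.symm hX hu hx v
      have e2 : adjMat R x v = adjMat R x y := absorb_col_const hCC hAP.symm hY hv hy x
      by_contra hc
      have h0 : adjMat R u v = 0 := by simp [adjMat, hc]
      have : (0 : ℂ) = 1 := by rw [← h0, e1, e2, hAx]
      simp at this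
    have hset : relsBtw ℛ X Y = {R} := by
      ext S
      simp only [relsBtw, Set.mem_setOf_eq, Set.mem_singleton_iff]
      constructor
      · rintro ⟨hS, hSsub⟩
        obtain ⟨s, hs⟩ := hCC.1 S hS
        have hsR : s ∈ R := hfull ▸ (hSsub hs)
        exact rel_eq_of_mem hCC hS hR hs hsR
      · rintro rfl; exact ⟨hR, hsub⟩
    rw [hset]
    exact Nat.card_unique
  · exfalso
    have hz : adjMat R = 0 := by
      rw [hA1]
      apply Finset.sum_eq_zero
      intro p hp
      exact (hzero p hp (fun h => hP0in (h ▸ hp))).1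
    rw [hz] at hAx
    simpa using hAx

end Aux8
/-- **Theorem (Statement 12).** For disjoint nonempty unions of fibers `U, U'` with
`V = U ∪ U'`: `𝒞 = 𝒞_U ⊞ 𝒞_{U'}` iff `𝒫_U(𝒞) ∩ 𝒫_{U'}(𝒞) = {P₀}`. -/
theorem internal_direct_sum_iff_P0
    {V : Type*} [Fintype V] [DecidableEq V] [Nonempty V]
    (ℛ : Set (Set (V × V))) (hCC : IsCC ℛ)
    (U U' : Set V) (hU : IsFiberUnion ℛ U) (hU' : IsFiberUnion ℛ U')
    (hUne : U.Nonempty) (hU'ne : U'.Nonempty)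
    (hdisj : Disjoint U U') (hcover : U ∪ U' = Set.univ) :
    (∀ X Y : Set V, IsFiber ℛ X → IsFiber ℛ Y → X ⊆ U → Y ⊆ U' →
        Nat.card (relsBtw ℛ X Y) = 1) ↔
      {P ∈ CPIs ℛ | P * idMat U ≠ 0 ∧ P * idMat U' ≠ 0} = {P0 ℛ} := by
  constructor
  · intro hLHS
    exact dir_forward hCC hU hU' hUne hU'ne hdisj hcover hLHS
  · intro hRHS
    exact dir_backward hCC hU hU' hdisj hcover hRHS

end CCPaper
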